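/- Suppose a ≠ 0 and b > 10a²/9. Then there exist x₂ < 0 < x₁ with A(x₂) = A(x₁) = 0 and A(x) ≤ 0 for all x ∈ [x₂, x₁]. -/
import Mathlib


/-- The polynomial `A(x)`. -/
def Apoly (a b x : ℝ) : ℝ :=
  10 * a ^ 2 - 9 * b + a * (30 * b + 4 * a ^ 2) * x + b * (36 * b + 16 * a ^ 2) * x ^ 2
    + 24 * a * b ^ 2 * x ^ 3 + 9 * b ^ 3 * x ^ 4

/-- For a continuous function negative at `0` and positive at some `T > 0`, there is a
smallest positive root, and the function is `≤ 0` on `[0, x₁]`. -/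
lemma first_pos_root (f : ℝ → ℝ) (hf : Continuous f) (T : ℝ) (hT : 0 < T)
    (h0 : f 0 < 0) (hfT : 0 < f T) :
    ∃ x₁ : ℝ, 0 < x₁ ∧ f x₁ = 0 ∧ ∀ x ∈ Set.Icc 0 x₁, f x ≤ 0 := by
  set S : Set ℝ := Set.Icc 0 T ∩ f ⁻¹' {0} with hS
  have hSclosed : IsClosed S := isClosed_Icc.inter (isClosed_singleton.preimage hf)
  have hmem : (0 : ℝ) ∈ Set.Icc (f 0) (f T) := ⟨h0.le, hfT.le⟩
  obtain ⟨z, hz, hfz⟩ := intermediate_value_Icc hT.le hf.continuousOn hmem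
  have hzS : z ∈ S := ⟨hz, hfz⟩
  have hSne : S.Nonempty := ⟨z, hzS⟩
  have hSbdd : BddBelow S := ⟨0, fun x hx => hx.1.1⟩
  set x₁ := sInf S with hx₁def
  have hx₁S : x₁ ∈ S := hSclosed.csInf_mem hSne hSbdd
  have hx₁0 : 0 ≤ x₁ := hx₁S.1.1
  have hfx₁ : f x₁ = 0 := hx₁S.2
  have hx₁pos : 0 < x₁ := by
    rcases lt_or_eq_of_le hx₁0 with h | h
    · exact h
    · exfalso; rw [← h] at hfx₁; linarith
  refine ⟨x₁, hx₁pos, hfx₁, ?_⟩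
  intro x hx
  by_contra hcon
  push_neg at hcon
  have hx0 : (0:ℝ) ≤ x := hx.1
  have hxx₁ : x ≤ x₁ := hx.2
  have hmem' : (0 : ℝ) ∈ Set.Icc (f 0) (f x) := ⟨h0.le, hcon.le⟩
  obtain ⟨w, hw, hfw⟩ := intermediate_value_Icc hx0 hf.continuousOn hmem'
  have hwS : w ∈ S := ⟨⟨hw.1, le_trans hw.2 (le_trans hxx₁ hx₁S.1.2)⟩, hfw⟩
  have h1 : x₁ ≤ w := csInf_le hSbdd hwS
  have hwx : w = x := le_antisymm hw.2 (le_trans hxx₁ h1)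
  rw [hwx] at hfw
  linarith [hfw]

theorem stmt10 (a b : ℝ) (ha : a ≠ 0) (hb : 10 * a ^ 2 / 9 < b) :
    ∃ x₂ x₁ : ℝ, x₂ < 0 ∧ 0 < x₁ ∧ Apoly a b x₂ = 0 ∧ Apoly a b x₁ = 0 ∧
      ∀ x ∈ Set.Icc x₂ x₁, Apoly a b x ≤ 0 := by
  have ha2 : 0 < a ^ 2 := by positivity
  have hb0 : 0 < b := by nlinarith
  obtain ⟨c, hc0, hca, hca', hc2⟩ :
      ∃ c : ℝ, 0 < c ∧ a ≤ c ∧ -c ≤ a ∧ c ^ 2 = a ^ 2 :=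
    ⟨|a|, abs_pos.mpr ha, le_abs_self a, neg_abs_le a, sq_abs a⟩
  obtain ⟨T, hT⟩ : ∃ T : ℝ,
      T = (24 * c * b ^ 2 + 30 * c * b + 4 * c * a ^ 2 + 9 * b) / (9 * b ^ 3) + 1 := ⟨_, rfl⟩
  have hTpos : 0 < T := by rw [hT]; positivity
  have hT1 : 1 ≤ T := by
    rw [hT]
    have : 0 ≤ (24 * c * b ^ 2 + 30 * c * b + 4 * c * a ^ 2 + 9 * b) / (9 * b ^ 3) := by
      positivity
    linarith
  have hTkey : 9 * b ^ 3 * T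
      = 24 * c * b ^ 2 + 30 * c * b + 4 * c * a ^ 2 + 9 * b + 9 * b ^ 3 := by
    rw [hT]; field_simp
  have hT3 : T ≤ T ^ 3 := by nlinarith [sq_nonneg (T - 1), sq_nonneg T]
  have hf0 : Apoly a b 0 < 0 := by
    simp only [Apoly]
    nlinarith
  have key : ∀ s : ℝ, s = 1 ∨ s = -1 → 0 < Apoly a b (s * T) := by
    intro s hs
    have hs2 : s ^ 2 = 1 := by rcases hs with h | h <;> rw [h] <;> norm_num
    have hs4 : s ^ 4 = 1 := by rcases hs with h | h <;> rw [h] <;> norm_num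
    have hsc : -c ≤ s * a := by
      rcases hs with h | h <;> rw [h] <;> [skip; skip] <;> nlinarith
    simp only [Apoly]
    have e1 : a * (30 * b + 4 * a ^ 2) * (s * T) = (s * a) * ((30 * b + 4 * a ^ 2) * T) := by
      ring
    have e2 : 24 * a * b ^ 2 * (s * T) ^ 3 = (s * a) * (24 * b ^ 2 * T ^ 3) := by
      have h3 : (s * T) ^ 3 = s * s ^ 2 * T ^ 3 := by ring
      rw [h3, hs2]; ring
    have e3 : b * (36 * b + 16 * a ^ 2) * (s * T) ^ 2 = b * (36 * b + 16 * a ^ 2) * T ^ 2 := by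
      have h3 : (s * T) ^ 2 = s ^ 2 * T ^ 2 := by ring
      rw [h3, hs2]; ring
    have e4 : 9 * b ^ 3 * (s * T) ^ 4 = 9 * b ^ 3 * T ^ 4 := by
      have h3 : (s * T) ^ 4 = s ^ 4 * T ^ 4 := by ring
      rw [h3, hs4]; ring
    rw [e1, e2, e3, e4]
    have hT3pos : 0 < T ^ 3 := by positivity
    have hb1 : -c * ((30 * b + 4 * a ^ 2) * T) ≤ (s * a) * ((30 * b + 4 * a ^ 2) * T) :=
      mul_le_mul_of_nonneg_right hsc (by positivity)
    have hb2 : -c * (24 * b ^ 2 * T ^ 3) ≤ (s * a) * (24 * b ^ 2 * T ^ 3) :=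
      mul_le_mul_of_nonneg_right hsc (by positivity)
    have hb3 : 0 ≤ b * (36 * b + 16 * a ^ 2) * T ^ 2 := by positivity
    have hquart : 9 * b ^ 3 * T ^ 4
        = (24 * c * b ^ 2 + 30 * c * b + 4 * c * a ^ 2 + 9 * b + 9 * b ^ 3) * T ^ 3 := by
      have h3 : 9 * b ^ 3 * T ^ 4 = (9 * b ^ 3 * T) * T ^ 3 := by ring
      rw [h3, hTkey]
    have hcb : 0 ≤ 30 * c * b + 4 * c * a ^ 2 := by positivity
    nlinarith [mul_nonneg hcb (by linarith : (0:ℝ) ≤ T ^ 3 - T),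
      mul_pos (by positivity : (0:ℝ) < 9 * b ^ 3) hT3pos,
      mul_nonneg (by positivity : (0:ℝ) ≤ 9 * b) (by nlinarith : (0:ℝ) ≤ T ^ 3 - 1)]
  have hcont : Continuous (Apoly a b) := by
    unfold Apoly; fun_prop
  obtain ⟨x₁, hx₁pos, hx₁root, hx₁le⟩ :=
    first_pos_root (Apoly a b) hcont T hTpos hf0 (by simpa using key 1 (Or.inl rfl))
  have hcontneg : Continuous (fun x => Apoly a b (-x)) := hcont.comp continuous_neg
  obtain ⟨y, hypos, hyroot, hyle⟩ :=
    first_pos_root (fun x => Apoly a b (-x)) hcontneg T hTpos (by simpa using hf0)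
      (by simpa using key (-1) (Or.inr rfl))
  refine ⟨-y, x₁, by linarith, hx₁pos, by simpa using hyroot, hx₁root, ?_⟩
  intro x hx
  rcases le_or_gt x 0 with h | h
  · have hmm : -x ∈ Set.Icc (0:ℝ) y := ⟨by linarith, by linarith [hx.1]⟩
    simpa using hyle (-x) hmm
  · exact hx₁le x ⟨h.le, hx.2⟩
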